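/- arXiv:2303.15243 — 6 statements merged into one kernel-verified Lean document; each statement's English description precedes it below -/
import Mathlib

section
/- If α is a root of the polynomial f_t(X) = X^4 - tX^3 - 6X^2 + tX + 1 (over ℂ, with parameter t ∈ ℂ), then (α - 1)/(α + 1) is also a root of f_t, provided α ≠ -1. -/
theorem stmt_0 (t α : ℂ) (hroot : α^4 - t*α^3 - 6*α^2 + t*α + 1 = 0)
    (hne : α ≠ -1) :
    ((α-1)/(α+1))^4 - t*((α-1)/(α+1))^3 - 6*((α-1)/(α+1))^2
      + t*((α-1)/(α+1)) + 1 = 0 := by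
  have h : α + 1 ≠ 0 := fun h => hne (by linear_combination h)
  set β := (α-1)/(α+1) with hβdef
  have hb : β * (α+1) = α - 1 := div_mul_cancel₀ _ h
  have h4 : (α+1)^4 ≠ 0 := pow_ne_zero 4 h
  have h2 : (α+1)^4 * (β^4 - t*β^3 - 6*β^2 + t*β + 1) = 0 := by
    linear_combination (-4 : ℂ)*hroot +
      ((α+1)^3*β^3 + (α+1)^2*(α-1-t*(α+1))*β^2
        + (α+1)*((α-1)^2 - 6*(α+1)^2 - t*(α-1)*(α+1))*β
        + (t*(α+1)^3 + (α-1)*((α-1)^2 - 6*(α+1)^2) - t*(α-1)^2*(α+1))) * hb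
  rcases mul_eq_zero.mp h2 with h' | h'
  · exact absurd h' h4
  · exact h'
end

section
/- Let t be an algebraic integer in an imaginary quadratic field with |t| ≥ 100, and suppose x, y are integers in the same field solving F_t(x,y) = μ with μ a root of unity, where F_t(X,Y) = X^4 - tX^3Y - 6X^2Y^2 + tXY^3 + Y^4. If x^4 = μ, |x| = 1, y ≠ 0, and y^3 + txy^2 - 6x^2y - tx^3 = 0, then |y| < 6.86. -/
theorem stmt_9 (O : Subring ℂ)
    (hO : ∀ z : ℂ, z ∈ O → z ≠ 0 → 1 ≤ ‖z‖)
    (t x y μ : ℂ) (ht : t ∈ O) (hx : x ∈ O) (hy : y ∈ O) (hμ : μ ∈ O)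
    (htabs : 100 ≤ ‖t‖)
    (hμunit : ∃ n : ℕ, 0 < n ∧ μ^n = 1)
    (hF : x^4 - t*x^3*y - 6*x^2*y^2 + t*x*y^3 + y^4 = μ)
    (hx4 : x^4 = μ) (hxabs : ‖x‖ = 1) (hy0 : y ≠ 0)
    (heq : y^3 + t*x*y^2 - 6*x^2*y - t*x^3 = 0) :
    ‖y‖ < 6.86 := by
  by_contra h
  push_neg at h
  have hwA : (y + t*x) * (y^2 - x^2) = 5*(x^2*y) := by linear_combination heq
  have hwO : y + t*x ∈ O := O.add_mem hy (O.mul_mem ht hx)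
  have hx0 : x ≠ 0 := by
    intro hx0; rw [hx0] at hxabs; simp at hxabs
  have hwne : y + t*x ≠ 0 := by
    intro h0
    rw [h0, zero_mul] at hwA
    have h5 : x ^ 2 * y = 0 := by
      have h5' : (5:ℂ) * (x ^ 2 * y) = 0 := hwA.symm
      simpa using h5'
    exact mul_ne_zero (pow_ne_zero 2 hx0) hy0 h5
  have h1 : 1 ≤ ‖y + t*x‖ := hO _ hwO hwne
  have habs : ‖y + t*x‖ * ‖y^2 - x^2‖ = 5 * ‖y‖ := by
    rw [← norm_mul, hwA]
    simp [norm_mul, sq, hxabs]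
  have hA : ‖y‖ ^ 2 - 1 ≤ ‖y^2 - x^2‖ := by
    have h2 := norm_add_le (y^2 - x^2) (x^2)
    simp only [sub_add_cancel, norm_pow, hxabs, one_pow] at h2
    linarith
  have h3 : ‖y^2 - x^2‖ ≤ 5 * ‖y‖ := by
    nlinarith [norm_nonneg (y^2 - x^2)]
  nlinarith
end

section
/- Let t ∈ ℂ with |t| ≥ 100. Then f_t(X) = X^4 - tX^3 - 6X^2 + tX + 1 has a root α with |α + 1/t| ≤ 5.01/|t|^3. -/
theorem stmt_11 (t : ℂ) (ht : 100 ≤ ‖t‖) :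
    ∃ α : ℂ, α^4 - t*α^3 - 6*α^2 + t*α + 1 = 0 ∧
      ‖α + 1/t‖ ≤ 5.01 / (‖t‖)^3 := by
  obtain ⟨s, hs⟩ := IsAlgClosed.exists_pow_nat_eq (t^2 + 16) (n := 2) (by norm_num)
  obtain ⟨y, hy2, hyge⟩ : ∃ y : ℂ, y^2 = t*y + 4 ∧
      ‖t - y‖ ≤ ‖y‖ := by
    rcases le_total (‖(t - s)/2‖) (‖(t + s)/2‖) with h | h
    · refine ⟨(t+s)/2, by linear_combination hs/4, ?_⟩
      rw [show t - (t+s)/2 = (t-s)/2 from by ring]; exact h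
    · refine ⟨(t-s)/2, by linear_combination hs/4, ?_⟩
      rw [show t - (t-s)/2 = (t+s)/2 from by ring]; exact h
  obtain ⟨r, hr⟩ := IsAlgClosed.exists_pow_nat_eq (y^2 + 4) (n := 2) (by norm_num)
  obtain ⟨α, hα2, hαle⟩ : ∃ α : ℂ, α^2 = y*α + 1 ∧
      ‖α‖ ≤ ‖y - α‖ := by
    rcases le_total (‖(y - r)/2‖) (‖(y + r)/2‖) with h | h
    · refine ⟨(y-r)/2, by linear_combination hr/4, ?_⟩
      rw [show y - (y-r)/2 = (y+r)/2 from by ring]; exact h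
    · refine ⟨(y+r)/2, by linear_combination hr/4, ?_⟩
      rw [show y - (y+r)/2 = (y-r)/2 from by ring]; exact h
  refine ⟨α, by linear_combination (α^2 - (t-y)*α - 1) * hα2 + α^2 * hy2, ?_⟩
  set T := ‖t‖ with hT
  set a := ‖α‖ with haa
  set v := ‖y - α‖ with hvv
  set u := ‖y‖ with huu
  set w := ‖t - y‖ with hww
  have hT0 : (0:ℝ) < T := by linarith
  have ht0 : t ≠ 0 := by
    intro h
    rw [hT, h] at hT0
    simp at hT0
  have ha0 : 0 ≤ a := norm_nonneg _
  have hw0 : 0 ≤ w := norm_nonneg _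
  have habs : a * v = 1 := by
    rw [haa, hvv, ← norm_mul]
    have : α * (y - α) = -1 := by linear_combination -hα2
    rw [this]; simp
  have ha1 : a ≤ 1 := by nlinarith
  have htri : T ≤ u + w := by
    have h := norm_add_le y (t - y)
    rwa [show y + (t - y) = t from by ring] at h
  have hu50 : (50:ℝ) ≤ u := by linarith
  have huw : u * w = 4 := by
    rw [huu, hww, ← norm_mul]
    have : y * (t - y) = -4 := by linear_combination -hy2
    rw [this]; simp
  have hw8 : w ≤ 0.08 := by nlinarith
  have hulb : T - 0.08 ≤ u := by linarith
  have huva : u ≤ v + a := by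
    have h := norm_add_le (y - α) α
    rwa [show (y - α) + α = y from by ring] at h
  have hv1 : (98.92:ℝ) ≤ v := by linarith
  have ha2 : a ≤ 0.0102 := by nlinarith
  have hv2 : T - 0.0902 ≤ v := by linarith
  have ha3 : a * (T - 0.0902) ≤ 1 := by nlinarith
  have hw2 : w * (T - 0.08) ≤ 4 := by nlinarith
  have ha4 : a ≤ 0.01001 := by nlinarith
  have haT : a * T ≤ 1.00091 := by nlinarith
  have hw4 : w ≤ 0.04004 := by nlinarith
  have hwT : w * T ≤ 4.00321 := by nlinarith
  have key : α + 1/t = (α^2 + (t-y)*α)/t := by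
    field_simp
    linear_combination -hα2
  rw [key, norm_div, ← hT]
  rw [div_le_div_iff₀ hT0 (by positivity)]
  have hnum : ‖α^2 + (t-y)*α‖ ≤ a^2 + w*a := by
    calc ‖α^2 + (t-y)*α‖ ≤ ‖α^2‖ + ‖(t-y)*α‖ :=
          norm_add_le _ _
      _ = a^2 + w*a := by rw [norm_pow, norm_mul]
  clear_value T a v u w
  have hTn : (0:ℝ) ≤ T^3 := by positivity
  have hfin : (a^2 + w*a) * T^2 ≤ 5.01 := by
    have haT0 : 0 ≤ a * T := mul_nonneg ha0 hT0.le
    have h1 : (a*T)*(a*T) ≤ 1.00091*1.00091 := mul_le_mul haT haT haT0 (by norm_num)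
    have h2 : (w*T)*(a*T) ≤ 4.00321*1.00091 := mul_le_mul hwT haT haT0 (by norm_num)
    have e1 : (a*T)*(a*T) = a^2*T^2 := by ring
    have e2 : (w*T)*(a*T) = (w*a)*T^2 := by ring
    rw [e1] at h1
    rw [e2] at h2
    calc (a^2 + w*a) * T^2 = a^2*T^2 + (w*a)*T^2 := by ring
      _ ≤ 1.00091*1.00091 + 4.00321*1.00091 := by linarith
      _ ≤ 5.01 := by norm_num
  calc ‖α^2 + (t-y)*α‖ * T^3 ≤ (a^2 + w*a) * T^3 :=
        mul_le_mul_of_nonneg_right hnum hTn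
    _ = ((a^2 + w*a) * T^2) * T := by ring
    _ ≤ 5.01 * T := mul_le_mul_of_nonneg_right hfin (le_of_lt hT0)
end

section
/- Let t ∈ ℂ with |t| ≥ 100. Then f_t(X) = X^4 - tX^3 - 6X^2 + tX + 1 has a root α with |α - t| ≤ 5.02/|t|. -/
theorem stmt_12 (t : ℂ) (ht : 100 ≤ ‖t‖) :
    ∃ α : ℂ, α^4 - t*α^3 - 6*α^2 + t*α + 1 = 0 ∧
      ‖α - t‖ ≤ 5.02 / ‖t‖ := by
  classical
  open Polynomial in
  -- Step 1: find a root of the quartic with large absolute value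
  obtain ⟨z, hz, hz24⟩ : ∃ z : ℂ, z^4 - t*z^3 - 6*z^2 + t*z + 1 = 0 ∧ 24 ≤ ‖z‖ := by
    set p : ℂ[X] := X^4 - C t * X^3 - C 6 * X^2 + C t * X + 1 with hp
    have hdeg : p.natDegree = 4 := by rw [hp]; compute_degree!
    have hmon : p.Monic := by
      unfold Polynomial.Monic; rw [hp]; unfold Polynomial.leadingCoeff; rw [← hp, hdeg, hp]
      simp [Polynomial.coeff_one, Polynomial.coeff_X_pow]
    have hsum : p.roots.sum = t := by
      have h := (IsAlgClosed.splits p).nextCoeff_eq_neg_sum_roots_of_monic hmon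
      rw [Polynomial.nextCoeff_of_natDegree_pos (by omega), hdeg] at h
      norm_num [hp, Polynomial.coeff_one, Polynomial.coeff_X_pow] at h
      rw [hp]; exact h.symm
    have hcard : p.roots.card ≤ 4 := hdeg ▸ p.card_roots'
    have hex : ∃ z ∈ p.roots, 24 ≤ ‖z‖ := by
      by_contra hc
      push_neg at hc
      have h1 : ‖p.roots.sum‖ ≤ (p.roots.map (‖·‖)).sum := by
        simpa using norm_multiset_sum_le p.roots
      have h2 : (p.roots.map (‖·‖)).sum ≤ (p.roots.map (‖·‖)).card • (24:ℝ) := by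
        apply Multiset.sum_le_card_nsmul
        intro x hx
        simp only [Multiset.mem_map] at hx
        obtain ⟨z, hz, rfl⟩ := hx
        exact le_of_lt (hc z hz)
      rw [Multiset.card_map] at h2
      have h3 : ‖t‖ ≤ p.roots.card • (24:ℝ) := hsum ▸ le_trans h1 h2
      have hle : (p.roots.card : ℝ) ≤ 4 := by exact_mod_cast hcard
      rw [nsmul_eq_mul] at h3
      nlinarith
    obtain ⟨z, hzm, hz24⟩ := hex
    refine ⟨z, ?_, hz24⟩
    have he : p.eval z = 0 := Polynomial.isRoot_of_mem_roots hzm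
    rw [hp] at he
    simpa using he
  -- Step 2: estimate the distance of that root to t
  refine ⟨z, hz, ?_⟩
  set s := ‖t‖ with hs
  set x := ‖z‖ with hx
  set d := ‖z - t‖ with hd
  have hd0 : 0 ≤ d := norm_nonneg _
  have hid : (z - t) * (z^3 - z) = 5*z^2 - 1 := by linear_combination hz
  have habs : d * ‖z^3 - z‖ = ‖5*z^2 - 1‖ := by
    rw [hd, ← norm_mul, hid]
  have hlow : x^3 - x ≤ ‖z^3 - z‖ := by
    have h1 : ‖z^3‖ ≤ ‖z^3 - z‖ + ‖z‖ :=
      calc ‖z^3‖ = ‖(z^3 - z) + z‖ := by ring_nf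
        _ ≤ _ := norm_add_le _ _
    rw [norm_pow] at h1
    linarith
  have hup : ‖5*z^2 - 1‖ ≤ 5*x^2 + 1 := by
    calc ‖5*z^2 - 1‖ ≤ ‖5*z^2‖ + ‖1‖ :=
          norm_sub_le _ _
      _ = 5*x^2 + 1 := by rw [norm_mul, norm_pow]; norm_num [hx]
  have key : d * (x^3 - x) ≤ 5*x^2 + 1 := by
    calc d * (x^3 - x) ≤ d * ‖z^3 - z‖ := mul_le_mul_of_nonneg_left hlow hd0
      _ = ‖5*z^2 - 1‖ := habs
      _ ≤ 5*x^2 + 1 := hup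
  have htri : s ≤ x + d := by
    calc s = ‖z - (z - t)‖ := by rw [hs]; ring_nf
      _ ≤ x + d := norm_sub_le _ _
  have hxpos : 0 < x^3 - x := by nlinarith
  have hd1 : d ≤ 1 := by nlinarith [key, hz24, hd0, hxpos, mul_nonneg hd0 hxpos.le]
  have hx99 : 99 ≤ x := by linarith
  have hd2 : d ≤ 0.051 := by nlinarith [key, hx99, hd0, hxpos, sq_nonneg (x - 99)]
  have hx3 : s - 0.051 ≤ x := by linarith
  have hfin : d * s ≤ 5.02 := by
    have h1 : d * s * (x^3 - x) ≤ (x + 0.051) * (5*x^2 + 1) := by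
      have e1 : d * s ≤ d * (x + 0.051) := mul_le_mul_of_nonneg_left (by linarith) hd0
      calc d * s * (x^3 - x) ≤ d * (x + 0.051) * (x^3 - x) :=
            mul_le_mul_of_nonneg_right e1 hxpos.le
        _ = (x + 0.051) * (d * (x^3 - x)) := by ring
        _ ≤ (x + 0.051) * (5*x^2 + 1) := mul_le_mul_of_nonneg_left key (by linarith)
    have h2 : (x + 0.051) * (5*x^2 + 1) ≤ 5.02 * (x^3 - x) := by
      nlinarith [hx99, sq_nonneg (x-99)]
    nlinarith [hxpos]
  rw [le_div_iff₀ (by linarith : (0:ℝ) < s)]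
  linarith [hfin]
end

section
/- Let t ∈ ℂ with |t| ≥ 100. Then f_t(X) = X^4 - tX^3 - 6X^2 + tX + 1 has roots α₁ and α₃ with |α₁ + 1| ≤ 2.16/|t| and |α₃ - 1| ≤ 2.16/|t|. -/
/-- Choose a square root `s` of `w` with `|c - s| ≤ |c + s|`. -/
lemma sqrt_choice (w c : ℂ) :
    ∃ s : ℂ, s ^ 2 = w ∧ ‖c - s‖ ≤ ‖c + s‖ := by
  obtain ⟨s, hs⟩ := IsAlgClosed.exists_pow_nat_eq (k := ℂ) w (n := 2) (by norm_num)
  rcases le_total (‖c - s‖) (‖c + s‖) with h | h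
  · exact ⟨s, hs, h⟩
  · refine ⟨-s, by rw [neg_pow]; simpa using hs, ?_⟩
    simpa [sub_neg_eq_add, ← sub_eq_add_neg] using h

theorem stmt_13 (t : ℂ) (ht : 100 ≤ ‖t‖) :
    ∃ α₁ α₃ : ℂ,
      (α₁^4 - t*α₁^3 - 6*α₁^2 + t*α₁ + 1 = 0 ∧
        ‖α₁ + 1‖ ≤ 2.16 / ‖t‖) ∧
      (α₃^4 - t*α₃^3 - 6*α₃^2 + t*α₃ + 1 = 0 ∧
        ‖α₃ - 1‖ ≤ 2.16 / ‖t‖) := by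
  obtain ⟨s, hs2, hsle⟩ := sqrt_choice (t ^ 2 + 16) t
  set A := ‖t‖ with hA_def
  have hA : (100 : ℝ) ≤ A := ht
  -- product relation
  have h16 : (t - s) * (t + s) = -16 := by linear_combination -hs2
  have habs16 : ‖t - s‖ * ‖t + s‖ = 16 := by
    rw [← norm_mul, h16]; simp
  have hts4 : ‖t - s‖ ≤ 4 := by
    nlinarith [norm_nonneg (t - s), norm_nonneg (t + s)]
  -- lower bound on |t + s|
  have h2t : ‖2 * t‖ ≤ ‖t + s‖ + ‖t - s‖ := by
    calc ‖2 * t‖ = ‖(t + s) + (t - s)‖ := by ring_nf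
    _ ≤ ‖t + s‖ + ‖t - s‖ := norm_add_le _ _
  have h2t' : ‖2 * t‖ = 2 * A := by
    rw [norm_mul, Complex.norm_two]
  have hS : 2 * A - 4 ≤ ‖t + s‖ := by
    rw [h2t'] at h2t; linarith
  have hS196 : (196 : ℝ) ≤ ‖t + s‖ := by linarith
  set u : ℂ := (t - s) / 2 with hu_def
  set B := ‖u‖ with hB_def
  have hB0 : 0 ≤ B := norm_nonneg u
  have hBS : B * ‖t + s‖ = 8 := by
    rw [hB_def, hu_def, norm_div, Complex.norm_two]
    rw [div_mul_eq_mul_div, habs16]; norm_num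
  have hBsmall : B ≤ 8 / 196 := by
    rw [le_div_iff₀ (by norm_num)]
    calc B * 196 ≤ B * ‖t + s‖ := by
          exact mul_le_mul_of_nonneg_left hS196 hB0
    _ = 8 := hBS
  have hBA : B * A ≤ 4 + 2 * B := by nlinarith [hBS, hS]
  have hu2 : u ^ 2 = t * u + 4 := by
    rw [hu_def]; linear_combination hs2 / 4
  -- square root v of u^2 + 4 near 2
  obtain ⟨v, hv2, hvle⟩ := sqrt_choice (u ^ 2 + 4) 2
  set C := ‖2 - v‖ with hC_def
  have hC0 : 0 ≤ C := norm_nonneg _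
  have hCV : C * ‖2 + v‖ = B ^ 2 := by
    rw [hC_def, ← norm_mul]
    have : (2 - v) * (2 + v) = -u ^ 2 := by linear_combination -hv2
    rw [this, norm_neg, norm_pow]
  have hCB : C ≤ B := by
    nlinarith [hvle, norm_nonneg (2 + v)]
  have hV : 4 - C ≤ ‖2 + v‖ := by
    have h4 : ‖(4 : ℂ)‖ ≤ ‖2 + v‖ + ‖2 - v‖ := by
      calc ‖(4 : ℂ)‖ = ‖(2 + v) + (2 - v)‖ := by ring_nf
      _ ≤ ‖2 + v‖ + ‖2 - v‖ := norm_add_le _ _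
    have : ‖(4 : ℂ)‖ = 4 := by simp
    rw [this] at h4; rw [hC_def]; linarith
  have hCbound : C * (4 - B) ≤ B ^ 2 := by
    calc C * (4 - B) ≤ C * ‖2 + v‖ := by
          have : 4 - B ≤ ‖2 + v‖ := by linarith
          exact mul_le_mul_of_nonneg_left this hC0
    _ = B ^ 2 := hCV
  have hC39 : C ≤ B ^ 2 / 3.9 := by
    rw [le_div_iff₀ (by norm_num)]
    nlinarith
  -- the roots
  refine ⟨(u - v) / 2, (u + v) / 2, ⟨?_, ?_⟩, ⟨?_, ?_⟩⟩
  · linear_combination (((u - v) / 2) ^ 2 - (t - u) * ((u - v) / 2) - 1) / 4 * hv2 +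
      ((u - v) / 2) ^ 2 * hu2
  · -- |α₁ + 1| bound
    have heq : (u - v) / 2 + 1 = (u + (2 - v)) / 2 := by ring
    have habs : ‖(u - v) / 2 + 1‖ ≤ (B + C) / 2 := by
      rw [heq, norm_div, Complex.norm_two]
      have := norm_add_le u (2 - v)
      rw [← hB_def, ← hC_def] at this
      linarith
    refine habs.trans ?_
    rw [div_le_div_iff₀ (by norm_num) (by linarith : (0:ℝ) < A)]
    nlinarith [hBA, hBsmall, hC39, hCB]
  · linear_combination (((u + v) / 2) ^ 2 - (t - u) * ((u + v) / 2) - 1) / 4 * hv2 +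
      ((u + v) / 2) ^ 2 * hu2
  · have heq : (u + v) / 2 - 1 = (u - (2 - v)) / 2 := by ring
    have habs : ‖(u + v) / 2 - 1‖ ≤ (B + C) / 2 := by
      rw [heq, norm_div, Complex.norm_two]
      have h1 : ‖u - (2 - v)‖ ≤ ‖u‖ + ‖2 - v‖ := by
        calc ‖u - (2 - v)‖ = ‖u + -(2 - v)‖ := by ring_nf
        _ ≤ ‖u‖ + ‖-(2 - v)‖ := norm_add_le _ _
        _ = ‖u‖ + ‖2 - v‖ := by rw [norm_neg]
      rw [← hB_def, ← hC_def] at h1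
      linarith
    refine habs.trans ?_
    rw [div_le_div_iff₀ (by norm_num) (by linarith : (0:ℝ) < A)]
    nlinarith [hBA, hBsmall, hC39, hCB]
end

section
/- Let α ∈ ℂ and suppose there exist real numbers k₀, l₀ > 0 and E, Q > 1 such that for every positive integer r there are Gaussian-type imaginary quadratic integers p_r, q_r (elements of the ring of integers O of a fixed imaginary quadratic field, so that nonzero elements have absolute value ≥ 1) with |q_r| < k₀Q^r, |q_r·α - p_r| ≤ l₀·E^{-r}, and p_r·q_{r+1} ≠ p_{r+1}·q_r. Then for all p, q ∈ O with |q| ≥ 1/(2l₀), |α - p/q| > 1/(c·|q|^{κ+1}) where c = 2k₀Q(2l₀E)^κ and κ = log Q / log E. -/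
set_option maxHeartbeats 1000000 in
theorem stmt_19 (O : Subring ℂ)
    (hO : ∀ z : ℂ, z ∈ O → z ≠ 0 → 1 ≤ ‖z‖)
    (α : ℂ) (k₀ l₀ E Q : ℝ)
    (hk₀ : 0 < k₀) (hl₀ : 0 < l₀) (hE : 1 < E) (hQ : 1 < Q)
    (p q : ℕ → ℂ)
    (hpO : ∀ r : ℕ, 1 ≤ r → p r ∈ O) (hqO : ∀ r : ℕ, 1 ≤ r → q r ∈ O)
    (hq : ∀ r : ℕ, 1 ≤ r → ‖q r‖ < k₀ * Q^r)
    (happrox : ∀ r : ℕ, 1 ≤ r → ‖q r * α - p r‖ ≤ l₀ * E^(-(r:ℝ)))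
    (hdet : ∀ r : ℕ, 1 ≤ r → p r * q (r+1) ≠ p (r+1) * q r)
    (P Q' : ℂ) (hP : P ∈ O) (hQ' : Q' ∈ O)
    (hQbig : 1/(2*l₀) ≤ ‖Q'‖) :
    1 / ((2*k₀*Q*(2*l₀*E)^(Real.log Q / Real.log E)) *
        ‖Q'‖^(Real.log Q / Real.log E + 1))
      < ‖α - P/Q'‖ := by
  set κ : ℝ := Real.log Q / Real.log E with hκdef
  have hE0 : (0:ℝ) < E := lt_trans one_pos hE
  have hQ0 : (0:ℝ) < Q := lt_trans one_pos hQ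
  have hlogE : 0 < Real.log E := Real.log_pos hE
  have hlogQ : 0 < Real.log Q := Real.log_pos hQ
  have hκ0 : 0 < κ := div_pos hlogQ hlogE
  set A : ℝ := ‖Q'‖ with hAdef
  have hA0 : 0 < A := lt_of_lt_of_le (by positivity) hQbig
  have hQ'ne : Q' ≠ 0 := by
    intro h
    rw [hAdef, h] at hA0
    simp at hA0
  set D : ℝ := 2 * l₀ * A with hDdef
  have hD0 : 0 < D := by positivity
  have hD1 : 1 ≤ D := by
    rw [div_le_iff₀ (by positivity)] at hQbig
    nlinarith
  -- choose minimal r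
  have hex : ∃ n : ℕ, D ≤ E ^ (n + 1) := by
    obtain ⟨n, hn⟩ := pow_unbounded_of_one_lt D hE
    exact ⟨n, le_trans hn.le (pow_le_pow_right₀ hE.le (by omega))⟩
  set m := Nat.find hex with hm
  set r := m + 1 with hrdef
  have hr1 : D ≤ E ^ r := Nat.find_spec hex
  have hr2 : E ^ m ≤ D := by
    rcases Nat.eq_zero_or_pos m with h0 | h0
    · rw [h0]; simpa using hD1
    · have := Nat.find_min hex (m := m - 1) (by omega)
      push_neg at this
      have : E ^ (m - 1 + 1) < D := this
      rw [Nat.sub_add_cancel h0] at this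
      exact this.le
  -- nonvanishing
  have hnv : ∃ n : ℕ, r ≤ n ∧ n ≤ r + 1 ∧ q n * P - p n * Q' ≠ 0 := by
    by_cases h1 : q r * P - p r * Q' = 0
    · refine ⟨r + 1, by omega, le_refl _, ?_⟩
      intro h2
      apply hdet r (by omega)
      have e1 : q r * P = p r * Q' := by linear_combination h1
      have e2 : q (r+1) * P = p (r+1) * Q' := by linear_combination h2
      have : p r * q (r+1) * Q' = p (r+1) * q r * Q' := by
        linear_combination q r * h2 - q (r+1) * h1
      exact mul_right_cancel₀ hQ'ne this
    · exact ⟨r, le_refl _, by omega, h1⟩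
  obtain ⟨n, hrn, hnr, hne⟩ := hnv
  have hn1 : 1 ≤ n := by omega
  -- small approximation at n
  have hEn : l₀ * E ^ (-(n:ℝ)) * A ≤ 1 / 2 := by
    have e1 : E ^ (-(n:ℝ)) = ((E:ℝ) ^ n)⁻¹ := by
      rw [Real.rpow_neg hE0.le, Real.rpow_natCast]
    have e2 : ((E:ℝ) ^ n)⁻¹ ≤ ((E:ℝ) ^ r)⁻¹ :=
      inv_anti₀ (by positivity) (pow_le_pow_right₀ hE.le hrn)
    have e3 : ((E:ℝ) ^ r)⁻¹ ≤ D⁻¹ := inv_anti₀ hD0 hr1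
    have : l₀ * E ^ (-(n:ℝ)) * A ≤ l₀ * D⁻¹ * A := by
      rw [e1]
      have := le_trans e2 e3
      nlinarith
    calc l₀ * E ^ (-(n:ℝ)) * A ≤ l₀ * D⁻¹ * A := this
      _ = 1/2 := by rw [hDdef]; field_simp
  set t : ℝ := ‖α - P / Q'‖ with htdef
  have key : (1:ℝ) ≤ ‖q n‖ * (A * t) + l₀ * E ^ (-(n:ℝ)) * A := by
    have hmem : q n * P - p n * Q' ∈ O :=
      O.sub_mem (O.mul_mem (hqO n hn1) hP) (O.mul_mem (hpO n hn1) hQ')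
    have h1 : (1:ℝ) ≤ ‖q n * P - p n * Q'‖ := hO _ hmem hne
    have hsplit : q n * P - p n * Q' = -(q n * (Q' * (α - P / Q'))) + (q n * α - p n) * Q' := by
      field_simp
      ring
    calc (1:ℝ) ≤ ‖q n * P - p n * Q'‖ := h1
      _ ≤ ‖-(q n * (Q' * (α - P / Q')))‖ + ‖(q n * α - p n) * Q'‖ := by
          rw [hsplit]; exact norm_add_le _ _
      _ = ‖q n‖ * (A * t) + ‖q n * α - p n‖ * A := by
          rw [norm_neg, norm_mul, norm_mul, norm_mul]
      _ ≤ ‖q n‖ * (A * t) + l₀ * E ^ (-(n:ℝ)) * A := by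
          have := happrox n hn1
          nlinarith
  have half : (1:ℝ)/2 ≤ ‖q n‖ * (A * t) := by linarith
  have ht0 : 0 < t := by
    by_contra h
    push_neg at h
    have h2 : ‖q n‖ * (A * t) ≤ 0 := by
      have h3 : (0:ℝ) ≤ ‖q n‖ * A := mul_nonneg (norm_nonneg _) hA0.le
      nlinarith
    linarith
  have hqn : ‖q n‖ < k₀ * Q ^ (r+1) := by
    calc ‖q n‖ < k₀ * Q ^ n := hq n hn1
      _ ≤ k₀ * Q ^ (r+1) := by
          have := pow_le_pow_right₀ (le_of_lt hQ) hnr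
          nlinarith
  have hmain : (1:ℝ)/2 < k₀ * Q ^ (r+1) * (A * t) := by
    have hAt : 0 < A * t := mul_pos hA0 ht0
    calc (1:ℝ)/2 ≤ ‖q n‖ * (A * t) := half
      _ < k₀ * Q ^ (r+1) * (A * t) := by
          exact mul_lt_mul_of_pos_right hqn hAt
  -- combine: Q^r ≤ (2 l₀ E A)^κ
  have hEκ : E ^ κ = Q := by
    rw [Real.rpow_def_of_pos hE0, hκdef, mul_comm, div_mul_cancel₀ _ (ne_of_gt hlogE),
      Real.exp_log hQ0]
  have hQr : (Q:ℝ) ^ r = ((E:ℝ) ^ r) ^ κ := by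
    rw [← hEκ, ← Real.rpow_natCast E r, ← Real.rpow_natCast (E ^ κ) r,
      ← Real.rpow_mul hE0.le, ← Real.rpow_mul hE0.le, mul_comm]
  have hQrle : (Q:ℝ) ^ r ≤ (2 * l₀ * E) ^ κ * A ^ κ := by
    have hED : (E:ℝ) ^ r ≤ E * D :=
      calc (E:ℝ) ^ r = E ^ m * E := by rw [hrdef, pow_succ]
        _ ≤ D * E := mul_le_mul_of_nonneg_right hr2 hE0.le
        _ = E * D := mul_comm _ _
    have h1 : ((E:ℝ) ^ r) ^ κ ≤ (E * D) ^ κ :=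
      Real.rpow_le_rpow (by positivity) hED hκ0.le
    have h2 : ((E:ℝ) * D) ^ κ = (2 * l₀ * E) ^ κ * A ^ κ := by
      rw [← Real.mul_rpow (by positivity) (by positivity)]
      congr 1
      rw [hDdef]; ring
    rw [hQr]
    linarith [h1, h2 ▸ h1]
  have hc0 : (0:ℝ) < 2*k₀*Q*(2*l₀*E)^κ := by positivity
  have hfin : 2 * k₀ * Q ^ (r+1) * A ≤ (2*k₀*Q*(2*l₀*E)^κ) * A ^ (κ + 1) := by
    have hA1 : A ^ (κ + 1) = A ^ κ * A := by
      rw [Real.rpow_add hA0, Real.rpow_one]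
    rw [hA1]
    calc 2 * k₀ * Q ^ (r+1) * A = (2 * k₀ * Q * A) * Q ^ r := by rw [pow_succ]; ring
      _ ≤ (2 * k₀ * Q * A) * ((2 * l₀ * E) ^ κ * A ^ κ) :=
          mul_le_mul_of_nonneg_left hQrle (by positivity)
      _ = (2*k₀*Q*(2*l₀*E)^κ) * (A ^ κ * A) := by ring
  have hlhs : 1 / ((2*k₀*Q*(2*l₀*E)^κ) * A ^ (κ + 1)) ≤ 1 / (2 * k₀ * Q ^ (r+1) * A) :=
    one_div_le_one_div_of_le (by positivity) hfin
  have hrhs : 1 / (2 * k₀ * Q ^ (r+1) * A) < t := by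
    rw [div_lt_iff₀ (by positivity),
      show t * (2 * k₀ * Q ^ (r+1) * A) = 2 * (k₀ * Q ^ (r+1) * (A * t)) from by ring]
    linarith
  exact lt_of_le_of_lt hlhs hrhs
end
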